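/- Let M₋ < Ψ(1/2) ≤ M₊ and define Ψ(t) = M₋ for t ∈ [0,1/2), Ψ(1/2) at t = 1/2, and M₊ for t ∈ (1/2,1]. If there is no Condorcet winning response, then no Nash equilibrium of the induced game has a pure first-player strategy; i.e., any Nash solution is mixed. -/
import Mathlib


open Finset

/-- A probability vector on `Fin n`. -/
def IsProb {n : ℕ} (π : Fin n → ℝ) : Prop := (∀ i, 0 ≤ π i) ∧ ∑ i, π i = 1

/-- Expected payoff of the two-player game with payoff matrix `A`. -/
def payoff {n : ℕ} (A : Fin n → Fin n → ℝ) (π π' : Fin n → ℝ) : ℝ :=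
  ∑ i, ∑ j, π i * π' j * A i j

/-- Nash equilibrium of the zero-sum game with payoff matrix `A`. -/
def IsNash {n : ℕ} (A : Fin n → Fin n → ℝ) (π₁ π₂ : Fin n → ℝ) : Prop :=
  IsProb π₁ ∧ IsProb π₂ ∧
  (∀ π, IsProb π → payoff A π π₂ ≤ payoff A π₁ π₂) ∧
  (∀ π', IsProb π' → payoff A π₁ π₂ ≤ payoff A π₁ π')


theorem stmt_8 {n : ℕ} (P : Fin n → Fin n → ℝ) (Mlo Mhi c : ℝ)
    (hM : Mlo < c) (hM' : c ≤ Mhi)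
    (hP01 : ∀ i j, 0 ≤ P i j ∧ P i j ≤ 1)
    (hPanti : ∀ i j, P i j + P j i = 1)
    (hNoTie : ∀ i j, i ≠ j → P i j ≠ 1 / 2)
    (hNoCondorcet : ∀ i, ∃ j, P i j < 1 / 2)
    (π₁ π₂ : Fin n → ℝ)
    (hNash : IsNash
      (fun i j => if P i j < 1 / 2 then Mlo else if P i j = 1 / 2 then c else Mhi) π₁ π₂) :
    ¬ ∃ i₀, π₁ = fun i => if i = i₀ then (1 : ℝ) else 0 := by
  rintro ⟨i₀, rfl⟩
  set A : Fin n → Fin n → ℝ :=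
    fun i j => if P i j < 1 / 2 then Mlo else if P i j = 1 / 2 then c else Mhi with hA
  obtain ⟨hp1, hp2, h1, h2⟩ := hNash
  obtain ⟨j₀, hj₀⟩ := hNoCondorcet i₀
  -- diagonal of A is c
  have hAd : ∀ i, A i i = c := by
    intro i
    have h := hPanti i i
    have h' : P i i = 1 / 2 := by linarith
    simp [hA, h']
  have hAsum : ∀ i j, i ≠ j → A i j + A j i = Mlo + Mhi := by
    intro i j hij
    have hps := hPanti i j
    rcases lt_trichotomy (P i j) (1 / 2) with h | h | h
    · have h' : ¬ P j i < 1 / 2 := by linarith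
      have h'' : P j i ≠ 1 / 2 := hNoTie j i hij.symm
      show (if P i j < 1 / 2 then Mlo else if P i j = 1 / 2 then c else Mhi) +
        (if P j i < 1 / 2 then Mlo else if P j i = 1 / 2 then c else Mhi) = Mlo + Mhi
      rw [if_pos h, if_neg h', if_neg h'']
    · exact absurd h (hNoTie i j hij)
    · have ha : ¬ P i j < 1 / 2 := by linarith
      have hb : P i j ≠ 1 / 2 := hNoTie i j hij
      have hc : P j i < 1 / 2 := by linarith
      show (if P i j < 1 / 2 then Mlo else if P i j = 1 / 2 then c else Mhi) +
        (if P j i < 1 / 2 then Mlo else if P j i = 1 / 2 then c else Mhi) = Mlo + Mhi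
      rw [if_neg ha, if_neg hb, if_pos hc]
      ring
  -- pure strategy at j₀
  have hpure : IsProb (fun i : Fin n => if i = j₀ then (1 : ℝ) else 0) := by
    constructor
    · intro i; dsimp only; split <;> norm_num
    · simp
  -- payoff of (pure i₀) vs (pure j₀) is A i₀ j₀ = Mlo
  have hval : payoff A (fun i => if i = i₀ then (1 : ℝ) else 0)
      (fun i => if i = j₀ then (1 : ℝ) else 0) = Mlo := by
    have hAval : A i₀ j₀ = Mlo := if_pos hj₀
    simp only [payoff, ite_mul, one_mul, zero_mul, mul_ite, mul_zero, mul_one,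
      Finset.sum_ite_eq', Finset.mem_univ, if_true]
    exact hAval
  have hv : payoff A (fun i => if i = i₀ then (1 : ℝ) else 0) π₂ ≤ Mlo := by
    have := h2 _ hpure
    rw [hval] at this
    exact this
  have hself : payoff A π₂ π₂ ≤ Mlo := le_trans (h1 π₂ hp2) hv
  -- now show payoff A π₂ π₂ > Mlo
  obtain ⟨k, hk⟩ : ∃ k, 0 < π₂ k := by
    by_contra h
    push_neg at h
    have : ∑ i, π₂ i ≤ 0 := Finset.sum_nonpos (fun i _ => h i)
    rw [hp2.2] at this
    linarith
  have hterm_nonneg : ∀ i j : Fin n, 0 ≤ π₂ i * π₂ j * (A i j + A j i - 2 * Mlo) := by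
    intro i j
    apply mul_nonneg (mul_nonneg (hp2.1 i) (hp2.1 j))
    rcases eq_or_ne i j with rfl | hij
    · rw [hAd i]; linarith
    · rw [hAsum i j hij]; linarith
  have hS : 0 < ∑ i, ∑ j, π₂ i * π₂ j * (A i j + A j i - 2 * Mlo) := by
    apply Finset.sum_pos'
    · intro i _
      exact Finset.sum_nonneg (fun j _ => hterm_nonneg i j)
    · refine ⟨k, Finset.mem_univ k, ?_⟩
      apply Finset.sum_pos'
      · intro j _; exact hterm_nonneg k j
      · refine ⟨k, Finset.mem_univ k, ?_⟩
        rw [hAd k]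
        exact mul_pos (mul_pos hk hk) (by linarith)
  have hswap : payoff A π₂ π₂ = ∑ i, ∑ j, π₂ i * π₂ j * A j i := by
    rw [payoff, Finset.sum_comm]
    apply Finset.sum_congr rfl
    intro j _
    apply Finset.sum_congr rfl
    intro i _
    ring
  have hone' : ∑ i, π₂ i * ∑ j, π₂ j = (1 : ℝ) := by
    rw [← Finset.sum_mul, hp2.2, one_mul]
  have hexpand : ∑ i, ∑ j, π₂ i * π₂ j * (A i j + A j i - 2 * Mlo)
      = payoff A π₂ π₂ + payoff A π₂ π₂ - 2 * Mlo := by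
    have e : ∀ i j : Fin n, π₂ i * π₂ j * (A i j + A j i - 2 * Mlo) =
        π₂ i * π₂ j * A i j + π₂ i * π₂ j * A j i - 2 * Mlo * (π₂ i * π₂ j) := by
      intros; ring
    have hs2 : (∑ i, ∑ j, π₂ i * π₂ j * A i j) = ∑ i, ∑ j, π₂ i * π₂ j * A j i := hswap
    simp_rw [e, Finset.sum_sub_distrib, Finset.sum_add_distrib, ← Finset.mul_sum]
    rw [hone', hs2, hswap]
    ring
  rw [hexpand] at hS
  linarith
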